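/- arXiv:1907.07292 — 2 statements merged into one kernel-verified Lean document; each statement's English description precedes it below -/
import Mathlib

section
/- Let $0 < \lambda < n$, let $\mathscr{D}$ be a dyadic grid in $\mathbb{R}^n$, and let $i, j \geq 0$ be integers. Let $S^{i,j}_{\lambda}$ be a fractional dyadic shift: $S^{i,j}_{\lambda} f = \sum_{K \in \mathscr{D}} \sum_{I^{(i)} = K, J^{(j)} = K} a_{I,J,K} \langle f, h_I \rangle h_J$ with coefficients $|a_{I,J,K}| \leq |I|^{1/2}|J|^{1/2}/|K|^{\lambda/n}$. Then for every $f$ and a.e. $x$, $|S^{i,j}_{\lambda} f(x)| \lesssim_{\lambda,n} I_{\lambda}|f|(x)$. -/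
open MeasureTheory ENNReal Set
noncomputable section

/-- An axis-parallel cube in `ℝⁿ`, given by its lower-left corner and (positive) side length. -/
structure Cube (n : ℕ) where
  corner : EuclideanSpace ℝ (Fin n)
  side : ℝ
  side_pos : 0 < side

namespace Cube
variable {n : ℕ}

/-- The (half-open) cube as a subset of `ℝⁿ`. -/
def set (I : Cube n) : Set (EuclideanSpace ℝ (Fin n)) :=
  {x | ∀ i, I.corner i ≤ x i ∧ x i < I.corner i + I.side}

/-- The volume `|I| = ℓ(I)^n` of the cube. -/
def vol (I : Cube n) : ℝ := I.side ^ n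

/-- The center of the cube. -/
def center (I : Cube n) : EuclideanSpace ℝ (Fin n) := WithLp.toLp 2 (fun i => I.corner i + I.side / 2)

end Cube

/-- A dyadic grid in `ℝⁿ`: all cubes have dyadic side lengths, the cubes of each fixed
side length `2^(-k)` partition `ℝⁿ`, and any two cubes are nested or disjoint. -/
def IsDyadicGrid {n : ℕ} (D : _root_.Set (Cube n)) : Prop :=
  (∀ I ∈ D, ∃ k : ℤ, I.side = (2 : ℝ) ^ (-k)) ∧
  (∀ k : ℤ, ∀ x : EuclideanSpace ℝ (Fin n),
    ∃! I : Cube n, I ∈ D ∧ I.side = (2 : ℝ) ^ (-k) ∧ x ∈ I.set) ∧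
  (∀ I ∈ D, ∀ J ∈ D, I.set ⊆ J.set ∨ J.set ⊆ I.set ∨ Disjoint I.set J.set)

/-- One-dimensional Haar function on the interval `[c, c+s)`; `η = false` gives the
non-cancellative `h⁰ = s^{-1/2} 1`, `η = true` the cancellative `h¹`. -/
def haar1 (c s : ℝ) (η : Bool) (t : ℝ) : ℝ :=
  if η then
    (if t ∈ Set.Ico c (c + s / 2) then s ^ (-(1:ℝ)/2)
     else if t ∈ Set.Ico (c + s / 2) (c + s) then -(s ^ (-(1:ℝ)/2)) else 0)
  else (if t ∈ Set.Ico c (c + s) then s ^ (-(1:ℝ)/2) else 0)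

/-- Tensor-product Haar function `h_I^η` on a cube `I ⊂ ℝⁿ`, with signature `η`. -/
def haarCube {n : ℕ} (I : Cube n) (η : Fin n → Bool) (x : EuclideanSpace ℝ (Fin n)) : ℝ :=
  ∏ i, haar1 (I.corner i) I.side (η i) (x i)

/-- The average `⟨g⟩_I = |I|⁻¹ ∫_I g`. -/
def cavg {n : ℕ} (g : EuclideanSpace ℝ (Fin n) → ℝ) (I : Cube n) : ℝ :=
  (1 / I.vol) * ∫ x in I.set, g x

/-- The martingale difference `Δ_I g = ∑_{I' child of I} ⟨g⟩_{I'} 1_{I'} - ⟨g⟩_I 1_I`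
associated with a cube `I` of the dyadic grid `D`. -/
def mdiff {n : ℕ} (D : _root_.Set (Cube n)) (I : Cube n)
    (g : EuclideanSpace ℝ (Fin n) → ℝ) (x : EuclideanSpace ℝ (Fin n)) : ℝ :=
  (∑' I' : {I' : Cube n // I' ∈ D ∧ I'.set ⊆ I.set ∧ I'.side = I.side / 2},
    Set.indicator I'.1.set (fun _ => cavg g I'.1) x) -
  Set.indicator I.set (fun _ => cavg g I) x

/-- The distance between two sets. -/
def setDist {α : Type*} [PseudoMetricSpace α] (A B : _root_.Set α) : ℝ :=
  sInf (Set.image2 dist A B)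

/-- The mixed norm `‖f‖_{L^{p₂}(L^{p₁})(μ₂ × μ₁)}` of an `ℝ≥0∞`-valued function,
inner exponent `p₁` (first variable), outer exponent `p₂` (second variable). -/
def mnorm {E F : Type*} [MeasurableSpace E] [MeasurableSpace F] (p₁ p₂ : ℝ)
    (μ₁ : Measure E) (μ₂ : Measure F) (g : E → F → ℝ≥0∞) : ℝ≥0∞ :=
  (∫⁻ x₂, (∫⁻ x₁, g x₁ x₂ ^ p₁ ∂μ₁) ^ (p₂ / p₁) ∂μ₂) ^ (1 / p₂)

/-- The measure `w^e dx` on `ℝⁿ`. -/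
def wMeasure {n : ℕ} (w : EuclideanSpace ℝ (Fin n) → ℝ) (e : ℝ) :
    Measure (EuclideanSpace ℝ (Fin n)) :=
  volume.withDensity fun x => ENNReal.ofReal (w x ^ e)

/-- `v ∈ A_r(ℝⁿ)` with constant at most `A`:
`⟨v⟩_Q ⟨v^{1-r'}⟩_Q^{r-1} ≤ A` for every cube `Q`. -/
def MemAp {n : ℕ} (r : ℝ) (v : EuclideanSpace ℝ (Fin n) → ℝ) (A : ℝ) : Prop :=
  ∀ Q : Cube n, cavg v Q * (cavg (fun x => v x ^ (1 - r / (r - 1))) Q) ^ (r - 1) ≤ A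

/-- The `A_{a,b}` characteristic `[w]_{A_{a,b}} = sup_Q ⟨w^b⟩_Q ⟨w^{-a'}⟩_Q^{b/a'}`. -/
def ApqConst {n : ℕ} (a b : ℝ) (w : EuclideanSpace ℝ (Fin n) → ℝ) : ℝ≥0∞ :=
  ⨆ Q : Cube n, ENNReal.ofReal
    (cavg (fun x => w x ^ b) Q * (cavg (fun x => w x ^ (-(a / (a - 1)))) Q) ^ (b * (a - 1) / a))

/-! ### Auxiliary lemmas -/

namespace FracShiftAux
variable {n : ℕ}

lemma measurableSet_set (I : Cube n) : MeasurableSet I.set := by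
  have h : I.set = ⋂ l, (fun x : EuclideanSpace ℝ (Fin n) => x l) ⁻¹'
      (Set.Ico (I.corner l) (I.corner l + I.side)) := by
    ext x; simp [Cube.set, Set.mem_iInter, Set.mem_Ico]
  rw [h]
  exact MeasurableSet.iInter fun l => (PiLp.continuous_apply 2 _ l).measurable measurableSet_Ico

lemma corner_mem (I : Cube n) : I.corner ∈ I.set :=
  fun l => ⟨le_refl _, by linarith [I.side_pos]⟩

lemma coord_abs_le_norm (z : EuclideanSpace ℝ (Fin n)) (l : Fin n) : |z l| ≤ ‖z‖ := by
  rw [EuclideanSpace.norm_eq]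
  have h1 : |z l| = Real.sqrt (‖z l‖ ^ 2) := by
    rw [Real.sqrt_sq_eq_abs, abs_norm, Real.norm_eq_abs]
  rw [h1]
  apply Real.sqrt_le_sqrt
  exact Finset.single_le_sum (f := fun i => ‖z i‖ ^ 2) (fun i _ => by positivity)
    (Finset.mem_univ l)

lemma norm_sub_le_of_mem {I : Cube n} {x y : EuclideanSpace ℝ (Fin n)}
    (hx : x ∈ I.set) (hy : y ∈ I.set) : ‖x - y‖ ≤ Real.sqrt n * I.side := by
  rw [EuclideanSpace.norm_eq]
  have hcoord : ∀ l, ‖(x - y) l‖ ^ 2 ≤ I.side ^ 2 := by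
    intro l
    have h1 := hx l; have h2 := hy l
    have e : (x - y) l = x l - y l := rfl
    rw [e, Real.norm_eq_abs, sq_abs]
    exact sq_le_sq' (by linarith) (by linarith)
  calc Real.sqrt (∑ l, ‖(x - y) l‖ ^ 2) ≤ Real.sqrt (∑ _l : Fin n, I.side ^ 2) :=
        Real.sqrt_le_sqrt (Finset.sum_le_sum fun l _ => hcoord l)
    _ = Real.sqrt ((n : ℝ) * I.side ^ 2) := by
        rw [Finset.sum_const, Finset.card_univ, Fintype.card_fin, nsmul_eq_mul]
    _ = Real.sqrt n * I.side := by
        rw [Real.sqrt_mul (by positivity), Real.sqrt_sq I.side_pos.le]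

lemma ball_subset_set (I : Cube n) : Metric.ball I.center (I.side / 4) ⊆ I.set := by
  intro z hz l
  have h1 : |z l - I.center l| ≤ ‖z - I.center‖ := by
    have := coord_abs_le_norm (z - I.center) l
    simpa using this
  rw [Metric.mem_ball, dist_eq_norm] at hz
  have h2 : |z l - I.center l| < I.side / 4 := lt_of_le_of_lt h1 hz
  have := abs_lt.mp h2
  have hc : I.center l = I.corner l + I.side / 2 := rfl
  constructor <;> [linarith [I.side_pos]; linarith [I.side_pos]]

lemma interior_nonempty (I : Cube n) : (interior I.set).Nonempty :=
  ⟨I.center, interior_maximal (ball_subset_set I) Metric.isOpen_ball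
    (Metric.mem_ball_self (by linarith [I.side_pos]))⟩

lemma haar1_abs_le {c s : ℝ} (hs : 0 < s) (η : Bool) (t : ℝ) :
    |haar1 c s η t| ≤ s ^ (-(1:ℝ)/2) := by
  have h0 : (0:ℝ) ≤ s ^ (-(1:ℝ)/2) := Real.rpow_nonneg hs.le _
  unfold haar1
  rcases η <;> simp only [Bool.false_eq_true, if_false, if_true] <;>
    split_ifs <;> simp [abs_of_nonneg h0, h0]

lemma haar1_eq_zero {c s t : ℝ} (hs : 0 < s) (η : Bool) (h : t ∉ Set.Ico c (c + s)) :
    haar1 c s η t = 0 := by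
  simp only [Set.mem_Ico, not_and_or, not_le, not_lt] at h
  unfold haar1
  rcases η <;> simp only [Bool.false_eq_true, if_false, if_true] <;>
    split_ifs with h1 h2 <;> first
      | rfl
      | (exfalso; simp only [Set.mem_Ico] at h1 ⊢
         rcases h with h | h <;> [linarith [h1.1, h1.2]; linarith [h1.1, h1.2]])
      | (exfalso; simp only [Set.mem_Ico] at h2 ⊢
         rcases h with h | h <;> [linarith [h2.1, h2.2]; linarith [h2.1, h2.2]])

lemma haarCube_eq_zero {I : Cube n} {η : Fin n → Bool} {x : EuclideanSpace ℝ (Fin n)}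
    (hx : x ∉ I.set) : haarCube I η x = 0 := by
  simp only [Cube.set, Set.mem_setOf_eq, not_forall] at hx
  obtain ⟨l, hl⟩ := hx
  apply Finset.prod_eq_zero (Finset.mem_univ l)
  apply haar1_eq_zero I.side_pos
  rw [Set.mem_Ico]; exact hl

lemma haarCube_abs_le (I : Cube n) (η : Fin n → Bool) (x : EuclideanSpace ℝ (Fin n)) :
    |haarCube I η x| ≤ I.vol ^ (-(1:ℝ)/2) := by
  have hs := I.side_pos
  calc |haarCube I η x| = ∏ l, |haar1 (I.corner l) I.side (η l) (x l)| := by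
        rw [haarCube, Finset.abs_prod]
    _ ≤ ∏ _l : Fin n, I.side ^ (-(1:ℝ)/2) :=
        Finset.prod_le_prod (fun l _ => abs_nonneg _) (fun l _ => haar1_abs_le hs _ _)
    _ = (I.side ^ (-(1:ℝ)/2)) ^ (n : ℕ) := by
        rw [Finset.prod_const, Finset.card_univ, Fintype.card_fin]
    _ = I.vol ^ (-(1:ℝ)/2) := by
        rw [Cube.vol, ← Real.rpow_natCast (I.side ^ (-(1:ℝ)/2)) n,
          ← Real.rpow_natCast I.side n, ← Real.rpow_mul hs.le, ← Real.rpow_mul hs.le,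
          mul_comm]

lemma pairing_bound (I : Cube n) (η : Fin n → Bool) (f : EuclideanSpace ℝ (Fin n) → ℝ) :
    ENNReal.ofReal |∫ y, f y * haarCube I η y| ≤
      ENNReal.ofReal (I.vol ^ (-(1:ℝ)/2)) * ∫⁻ y in I.set, ENNReal.ofReal |f y| := by
  have step1 : ENNReal.ofReal |∫ y, f y * haarCube I η y| ≤
      ∫⁻ y, ENNReal.ofReal |f y * haarCube I η y| := by
    calc ENNReal.ofReal |∫ y, f y * haarCube I η y|
        = (‖∫ y, f y * haarCube I η y‖₊ : ℝ≥0∞) := by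
          rw [← enorm_eq_nnnorm, Real.enorm_eq_ofReal_abs]
      _ ≤ ∫⁻ y, (‖f y * haarCube I η y‖₊ : ℝ≥0∞) := enorm_integral_le_lintegral_enorm _
      _ = ∫⁻ y, ENNReal.ofReal |f y * haarCube I η y| := by
          simp_rw [← enorm_eq_nnnorm, Real.enorm_eq_ofReal_abs]
  refine step1.trans ?_
  have step2 : ∀ y, ENNReal.ofReal |f y * haarCube I η y| ≤
      I.set.indicator (fun y => ENNReal.ofReal (I.vol ^ (-(1:ℝ)/2)) * ENNReal.ofReal |f y|) y := by
    intro y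
    by_cases hy : y ∈ I.set
    · rw [Set.indicator_of_mem hy, abs_mul, ENNReal.ofReal_mul (abs_nonneg _), mul_comm]
      exact mul_le_mul' (ENNReal.ofReal_le_ofReal (haarCube_abs_le I η y)) le_rfl
    · rw [Set.indicator_of_notMem hy, haarCube_eq_zero hy, mul_zero]; simp
  calc ∫⁻ y, ENNReal.ofReal |f y * haarCube I η y|
      ≤ ∫⁻ y, I.set.indicator
          (fun y => ENNReal.ofReal (I.vol ^ (-(1:ℝ)/2)) * ENNReal.ofReal |f y|) y :=
        lintegral_mono step2
    _ = ∫⁻ y in I.set, ENNReal.ofReal (I.vol ^ (-(1:ℝ)/2)) * ENNReal.ofReal |f y| :=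
        lintegral_indicator (measurableSet_set I) _
    _ = ENNReal.ofReal (I.vol ^ (-(1:ℝ)/2)) * ∫⁻ y in I.set, ENNReal.ofReal |f y| :=
        lintegral_const_mul' _ _ ENNReal.ofReal_ne_top

lemma kernel_bound (hn : 0 < n) (lam : ℝ) (hlam0 : 0 < lam)
    (x y : EuclideanSpace ℝ (Fin n)) (hxy : y ≠ x)
    (A : ℤ → Set (EuclideanSpace ℝ (Fin n)))
    (hA : ∀ k : ℤ, y ∈ A k → ‖x - y‖ ≤ Real.sqrt n * (2:ℝ) ^ (-k : ℤ)) :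
    (∑' k : ℤ, (A k).indicator (fun _ => ENNReal.ofReal ((2:ℝ) ^ ((k:ℝ) * lam))) y) ≤
      ENNReal.ofReal (Real.sqrt n ^ lam * (1 - (2:ℝ) ^ (-lam))⁻¹) *
        (ENNReal.ofReal (‖x - y‖ ^ lam))⁻¹ := by
  have hn' : (0:ℝ) < n := by exact_mod_cast hn
  have hsn : 0 < Real.sqrt n := Real.sqrt_pos.mpr hn'
  have hr : (0:ℝ) < ‖x - y‖ := by
    rw [norm_pos_iff]; exact sub_ne_zero.mpr (Ne.symm hxy)
  set r := ‖x - y‖ with hrdef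
  set k0 : ℤ := ⌊Real.logb 2 (Real.sqrt n / r)⌋ with hk0
  have hdivpos : 0 < Real.sqrt n / r := div_pos hsn hr
  have h2k0 : (2:ℝ) ^ ((k0:ℝ)) ≤ Real.sqrt n / r := by
    calc (2:ℝ) ^ ((k0:ℝ)) ≤ (2:ℝ) ^ Real.logb 2 (Real.sqrt n / r) :=
          Real.rpow_le_rpow_of_exponent_le one_le_two (Int.floor_le _)
      _ = Real.sqrt n / r := Real.rpow_logb two_pos (by norm_num) hdivpos
  have hW : ∀ k : ℤ, (A k).indicator (fun _ => ENNReal.ofReal ((2:ℝ) ^ ((k:ℝ) * lam))) y ≤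
      (if k ≤ k0 then ENNReal.ofReal ((2:ℝ) ^ ((k:ℝ) * lam)) else 0) := by
    intro k
    by_cases hy : y ∈ A k
    · rw [Set.indicator_of_mem hy]
      have hnorm := hA k hy
      have hk : k ≤ k0 := by
        rw [hk0]
        apply Int.le_floor.mpr
        rw [Real.le_logb_iff_rpow_le one_lt_two hdivpos]
        have h2z : ((2:ℝ) ^ (-k : ℤ)) = (2:ℝ) ^ ((-k : ℤ) : ℝ) := (Real.rpow_intCast 2 (-k)).symm
        have hzpos : (0:ℝ) < (2:ℝ) ^ ((k:ℝ)) := Real.rpow_pos_of_pos two_pos _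
        rw [h2z] at hnorm
        have he : ((-k : ℤ) : ℝ) = -(k:ℝ) := by push_cast; ring
        rw [he, Real.rpow_neg (by norm_num : (0:ℝ) ≤ 2)] at hnorm
        rw [le_div_iff₀ hr]
        calc (2:ℝ) ^ ((k:ℝ)) * r ≤ (2:ℝ) ^ ((k:ℝ)) * (Real.sqrt n * ((2:ℝ) ^ ((k:ℝ)))⁻¹) :=
              mul_le_mul_of_nonneg_left hnorm hzpos.le
          _ = Real.sqrt n := by field_simp
      rw [if_pos hk]
    · rw [Set.indicator_of_notMem hy]; exact zero_le
  refine (ENNReal.tsum_le_tsum hW).trans ?_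
  set v : ℤ → ℝ≥0∞ := fun k => if k ≤ k0 then ENNReal.ofReal ((2:ℝ) ^ ((k:ℝ) * lam)) else 0
    with hv
  have hinj : Function.Injective (fun m : ℕ => k0 - (m : ℤ)) := by
    intro m1 m2 h; simpa using h
  have hsupp : Function.support v ⊆ Set.range (fun m : ℕ => k0 - (m : ℤ)) := by
    intro k hk
    have hkle : k ≤ k0 := by
      by_contra hgt
      exact hk (by rw [hv]; simp only [if_neg hgt])
    exact ⟨(k0 - k).toNat, by simp; omega⟩
  have hre := hinj.tsum_eq (f := v) hsupp
  rw [← hre]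
  have hterm : ∀ m : ℕ, v (k0 - (m:ℤ)) =
      ENNReal.ofReal ((2:ℝ) ^ ((k0:ℝ) * lam)) * (ENNReal.ofReal ((2:ℝ) ^ (-lam))) ^ m := by
    intro m
    rw [hv]; simp only [if_pos (by omega : (k0 - (m:ℤ)) ≤ k0)]
    have e1 : ((k0 - (m:ℤ) : ℤ) : ℝ) * lam = (k0:ℝ) * lam + (m:ℝ) * (-lam) := by
      push_cast; ring
    rw [e1, Real.rpow_add two_pos]
    rw [ENNReal.ofReal_mul (Real.rpow_nonneg (by norm_num) _)]
    congr 1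
    rw [mul_comm (m:ℝ) (-lam), Real.rpow_mul (by norm_num : (0:ℝ) ≤ 2), Real.rpow_natCast,
      ENNReal.ofReal_pow (Real.rpow_nonneg (by norm_num) _)]
  have h1m : (0:ℝ) < 1 - (2:ℝ) ^ (-lam) := by
    have : (2:ℝ) ^ (-lam) < 1 :=
      Real.rpow_lt_one_of_one_lt_of_neg one_lt_two (neg_lt_zero.mpr hlam0)
    linarith
  calc (∑' m : ℕ, v (k0 - (m:ℤ)))
      = ENNReal.ofReal ((2:ℝ) ^ ((k0:ℝ) * lam)) *
          ∑' m : ℕ, (ENNReal.ofReal ((2:ℝ) ^ (-lam))) ^ m := by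
        simp_rw [hterm]; rw [ENNReal.tsum_mul_left]
    _ = ENNReal.ofReal ((2:ℝ) ^ ((k0:ℝ) * lam)) * (1 - ENNReal.ofReal ((2:ℝ) ^ (-lam)))⁻¹ := by
        rw [ENNReal.tsum_geometric]
    _ ≤ ENNReal.ofReal (Real.sqrt n ^ lam * (r ^ lam)⁻¹) *
          ENNReal.ofReal ((1 - (2:ℝ) ^ (-lam))⁻¹) := by
        apply mul_le_mul'
        · apply ENNReal.ofReal_le_ofReal
          calc (2:ℝ) ^ ((k0:ℝ) * lam) = ((2:ℝ) ^ ((k0:ℝ))) ^ lam := by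
                rw [← Real.rpow_mul (by norm_num : (0:ℝ) ≤ 2)]
            _ ≤ (Real.sqrt n / r) ^ lam :=
                Real.rpow_le_rpow (Real.rpow_nonneg (by norm_num) _) h2k0 hlam0.le
            _ = Real.sqrt n ^ lam * (r ^ lam)⁻¹ := by
                rw [Real.div_rpow hsn.le hr.le, div_eq_mul_inv]
        · rw [← ENNReal.ofReal_one, ← ENNReal.ofReal_sub _ (Real.rpow_nonneg (by norm_num) _),
            ENNReal.ofReal_inv_of_pos h1m]
    _ = ENNReal.ofReal (Real.sqrt n ^ lam * (1 - (2:ℝ) ^ (-lam))⁻¹) *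
          (ENNReal.ofReal (r ^ lam))⁻¹ := by
        rw [← ENNReal.ofReal_inv_of_pos (Real.rpow_pos_of_pos hr _),
          ← ENNReal.ofReal_mul (by positivity),
          ← ENNReal.ofReal_mul (mul_nonneg (by positivity) (inv_nonneg.mpr h1m.le))]
        congr 1
        ring

lemma sum_withDensity {E : Type*} [MeasurableSpace E] {μ : Measure E}
    (A : ℤ → Set E) (hms : ∀ k, MeasurableSet (A k)) (ck : ℤ → ℝ≥0∞) (g W : E → ℝ≥0∞)
    (hW : W = fun y => ∑' k : ℤ, (A k).indicator (fun _ => ck k) y)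
    (hWfin : ∀ᵐ y ∂μ, W y < ∞) :
    (∑' k : ℤ, ck k * ∫⁻ y in A k, g y ∂μ) = ∫⁻ y, W y * g y ∂μ := by
  have hmeas : ∀ k : ℤ, Measurable ((A k).indicator (fun _ => ck k)) :=
    fun k => measurable_const.indicator (hms k)
  have hWmeas : Measurable W := by
    rw [hW]; exact Measurable.ennreal_tsum hmeas
  have key : ∀ k : ℤ, ck k * ∫⁻ y in A k, g y ∂μ =
      ∫⁻ y, g y ∂(μ.withDensity ((A k).indicator (fun _ => ck k))) := by
    intro k
    rw [withDensity_indicator (hms k), withDensity_const, lintegral_smul_measure, smul_eq_mul]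
  simp_rw [key]
  rw [← lintegral_sum_measure]
  have hsum : (Measure.sum fun k : ℤ => μ.withDensity ((A k).indicator fun _ => ck k)) =
      μ.withDensity W := by
    rw [← withDensity_tsum hmeas]
    congr 1
    funext y
    rw [hW]
    exact tsum_apply (Pi.summable.mpr fun _ => ENNReal.summable)
  rw [hsum, lintegral_withDensity_eq_lintegral_mul_non_measurable μ hWmeas hWfin g]
  rfl

end FracShiftAux

/-- Pointwise domination of a fractional dyadic shift by the fractional
integral: if `S^{i,j}_λ f = ∑_{K ∈ 𝒟} ∑_{I^{(i)}=K, J^{(j)}=K} a_{I,J,K} ⟨f,h_I⟩ h_J` with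
`|a_{I,J,K}| ≤ |I|^{1/2}|J|^{1/2}/|K|^{λ/n}`, then `|S^{i,j}_λ f(x)| ≲_{λ,n} I_λ|f|(x)` a.e.
(stated in the strong form where the shift is summed with absolute values). -/
theorem fractional_shift_dominated_by_fractional_integral
    (n : ℕ) (hn : 0 < n) (lam : ℝ) (hlam0 : 0 < lam) (hlamn : lam < n) (i j : ℕ) :
    ∃ C : ℝ, 0 < C ∧ ∀ (D : _root_.Set (Cube n)), IsDyadicGrid D →
      ∀ a : Cube n → Cube n → Cube n → ℝ,
        (∀ K I J : Cube n, K ∈ D → I ∈ D → J ∈ D →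
          |a K I J| ≤ I.vol ^ ((1:ℝ)/2) * J.vol ^ ((1:ℝ)/2) / K.vol ^ (lam / n)) →
      ∀ sig : Cube n → Fin n → Bool,
      ∀ f : EuclideanSpace ℝ (Fin n) → ℝ,
        ∀ᵐ x : EuclideanSpace ℝ (Fin n) ∂volume,
          (∑' T : {T : Cube n × Cube n × Cube n //
              T.1 ∈ D ∧ T.2.1 ∈ D ∧ T.2.2 ∈ D ∧
              T.2.1.set ⊆ T.1.set ∧ T.1.side = 2 ^ i * T.2.1.side ∧
              T.2.2.set ⊆ T.1.set ∧ T.1.side = 2 ^ j * T.2.2.side},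
            ENNReal.ofReal (|a T.1.1 T.1.2.1 T.1.2.2| *
              |∫ y, f y * haarCube T.1.2.1 (sig T.1.2.1) y| *
              |haarCube T.1.2.2 (sig T.1.2.2) x|)) ≤
          ENNReal.ofReal C *
            ∫⁻ y, ENNReal.ofReal |f y| / ENNReal.ofReal (‖x - y‖ ^ lam) := by
  classical
  have hn' : (0:ℝ) < n := by exact_mod_cast hn
  have hnne : (n:ℝ) ≠ 0 := hn'.ne'
  have hsn : 0 < Real.sqrt n := Real.sqrt_pos.mpr hn'
  have h1m : (0:ℝ) < 1 - (2:ℝ) ^ (-lam) := by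
    have : (2:ℝ) ^ (-lam) < 1 :=
      Real.rpow_lt_one_of_one_lt_of_neg one_lt_two (neg_lt_zero.mpr hlam0)
    linarith
  refine ⟨Real.sqrt n ^ lam * (1 - (2:ℝ) ^ (-lam))⁻¹,
    mul_pos (Real.rpow_pos_of_pos hsn lam) (inv_pos.mpr h1m), ?_⟩
  intro D hD a ha sig f
  obtain ⟨hD1, hD2, hD3⟩ := hD
  choose K0 hK0 hK0u using hD2
  refine Filter.Eventually.of_forall fun x => ?_
  set C : ℝ := Real.sqrt n ^ lam * (1 - (2:ℝ) ^ (-lam))⁻¹ with hCdef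
  set g : EuclideanSpace ℝ (Fin n) → ℝ≥0∞ := fun y => ENNReal.ofReal |f y| with hg
  set A : ℤ → _root_.Set (EuclideanSpace ℝ (Fin n)) := fun k => (K0 k x).set with hA
  set ck : ℤ → ℝ≥0∞ := fun k => ENNReal.ofReal ((2:ℝ) ^ ((k:ℝ) * lam)) with hck
  set S : _root_.Set (ℤ × Cube n) :=
    {q | q.2 ∈ D ∧ q.2.set ⊆ A q.1 ∧ q.2.side = (2:ℝ) ^ (-(q.1 + (i:ℤ)))} with hS
  set B : ℤ × Cube n → ℝ≥0∞ :=
    fun p => S.indicator (fun q => ck q.1 * ∫⁻ y in q.2.set, g y) p with hB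
  set W : EuclideanSpace ℝ (Fin n) → ℝ≥0∞ :=
    fun y => ∑' k : ℤ, (A k).indicator (fun _ => ck k) y with hW
  have hvolpos : ∀ Q : Cube n, (0:ℝ) < Q.vol := fun Q => pow_pos Q.side_pos n
  -- distinct cubes of the same dyadic scale are disjoint
  have hsame : ∀ (m : ℤ) (I1 I2 : Cube n), I1 ∈ D → I2 ∈ D →
      I1.side = (2:ℝ) ^ (-m) → I2.side = (2:ℝ) ^ (-m) → I1 ≠ I2 →
      Disjoint I1.set I2.set := by
    intro m I1 I2 h1 h2 hs1 hs2 hne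
    rcases hD3 I1 h1 I2 h2 with h | h | h
    · exfalso
      have e1 : I1 = K0 m I1.corner := hK0u m I1.corner I1 ⟨h1, hs1, FracShiftAux.corner_mem I1⟩
      have e2 : I2 = K0 m I1.corner :=
        hK0u m I1.corner I2 ⟨h2, hs2, h (FracShiftAux.corner_mem I1)⟩
      exact hne (e1.trans e2.symm)
    · exfalso
      have e1 : I1 = K0 m I2.corner :=
        hK0u m I2.corner I1 ⟨h1, hs1, h (FracShiftAux.corner_mem I2)⟩
      have e2 : I2 = K0 m I2.corner := hK0u m I2.corner I2 ⟨h2, hs2, FracShiftAux.corner_mem I2⟩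
      exact hne (e1.trans e2.symm)
    · exact h
  -- structural facts about a triple in the support
  have core : ∀ (K I J : Cube n), K ∈ D → I ∈ D → J ∈ D → I.set ⊆ K.set →
      K.side = 2 ^ i * I.side → J.set ⊆ K.set → K.side = 2 ^ j * J.side → x ∈ J.set →
      K = K0 (-(Int.log 2 K.side)) x ∧ J = K0 (-(Int.log 2 K.side) + j) x ∧
        ((-(Int.log 2 K.side), I) ∈ S) ∧
        ENNReal.ofReal (K.vol ^ (-(lam / n))) = ck (-(Int.log 2 K.side)) := by
    intro K I J hK hI hJ hIK hKIs hJK hKJs hxJ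
    obtain ⟨m, hm⟩ := hD1 K hK
    have hlog : -(Int.log 2 K.side) = m := by
      rw [hm, show ((2:ℝ) ^ (-m)) = ((2:ℕ):ℝ) ^ (-m) by norm_num,
        Int.log_zpow (by norm_num : 1 < (2:ℕ))]
      exact neg_neg m
    have hxK : x ∈ K.set := hJK hxJ
    have hKeq : K = K0 m x := hK0u m x K ⟨hK, hm, hxK⟩
    have hsideformula : ∀ (l : ℕ) (Q : Cube n), K.side = 2 ^ l * Q.side →
        Q.side = (2:ℝ) ^ (-(m + (l:ℤ))) := by
      intro l Q hQ
      have h2l : ((2:ℝ) ^ (l:ℕ)) ≠ 0 := by positivity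
      have hq : Q.side = K.side / 2 ^ (l:ℕ) := by
        rw [eq_div_iff h2l, hQ]; ring
      rw [hq, hm, show ((2:ℝ) ^ (l:ℕ)) = (2:ℝ) ^ ((l:ℕ):ℤ) from (zpow_natCast 2 l).symm,
        ← zpow_sub₀ (two_ne_zero)]
      congr 1
      ring
    have hJside := hsideformula j J hKJs
    have hIside := hsideformula i I hKIs
    have hJeq : J = K0 (m + j) x := hK0u (m + j) x J ⟨hJ, hJside, hxJ⟩
    have hvol : K.vol ^ (-(lam / n)) = (2:ℝ) ^ ((m:ℝ) * lam) := by
      have e1 : K.side = (2:ℝ) ^ (((-m : ℤ)) : ℝ) := by rw [hm, Real.rpow_intCast]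
      rw [Cube.vol, ← Real.rpow_natCast K.side n, e1,
        ← Real.rpow_mul (by norm_num : (0:ℝ) ≤ 2), ← Real.rpow_mul (by norm_num : (0:ℝ) ≤ 2)]
      congr 1
      push_cast
      field_simp
    rw [hlog]
    refine ⟨hKeq, hJeq, ⟨hI, ?_, hIside⟩, by rw [hvol]⟩
    rw [hKeq] at hIK
    exact hIK
  -- x must lie in J for a nonzero term
  have hmemJ : ∀ (J : Cube n) (r1 r2 : ℝ),
      ENNReal.ofReal (r1 * r2 * |haarCube J (sig J) x|) ≠ 0 → x ∈ J.set := by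
    intro J r1 r2 hne
    by_contra hx
    exact hne (by rw [FracShiftAux.haarCube_eq_zero hx]; simp)
  set F := fun T : {T : Cube n × Cube n × Cube n //
      T.1 ∈ D ∧ T.2.1 ∈ D ∧ T.2.2 ∈ D ∧
      T.2.1.set ⊆ T.1.set ∧ T.1.side = 2 ^ i * T.2.1.side ∧
      T.2.2.set ⊆ T.1.set ∧ T.1.side = 2 ^ j * T.2.2.side} =>
    ENNReal.ofReal (|a T.1.1 T.1.2.1 T.1.2.2| *
      |∫ y, f y * haarCube T.1.2.1 (sig T.1.2.1) y| *
      |haarCube T.1.2.2 (sig T.1.2.2) x|) with hF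
  -- Step 1: compare against the reorganized sum over (scale, I)
  have hboundT : ∀ T, F T ≠ 0 → F T ≤ B (-(Int.log 2 T.1.1.side), T.1.2.1) ∧
      T.1.1 = K0 (-(Int.log 2 T.1.1.side)) x ∧
      T.1.2.2 = K0 (-(Int.log 2 T.1.1.side) + j) x := by
    rintro ⟨⟨K, I, J⟩, hK, hI, hJ, hIK, hKIs, hJK, hKJs⟩ hne
    have hxJ : x ∈ J.set := hmemJ J _ _ hne
    obtain ⟨hKeq, hJeq, hScond, hckeq⟩ := core K I J hK hI hJ hIK hKIs hJK hKJs hxJ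
    refine ⟨?_, hKeq, hJeq⟩
    have hIv := hvolpos I; have hJv := hvolpos J; have hKv := hvolpos K
    have hreal : I.vol ^ ((1:ℝ)/2) * J.vol ^ ((1:ℝ)/2) / K.vol ^ (lam/n) *
        I.vol ^ (-(1:ℝ)/2) * J.vol ^ (-(1:ℝ)/2) = K.vol ^ (-(lam/n)) := by
      have cI : I.vol ^ ((1:ℝ)/2) * I.vol ^ (-(1:ℝ)/2) = 1 := by
        rw [← Real.rpow_add hIv]; norm_num
      have cJ : J.vol ^ ((1:ℝ)/2) * J.vol ^ (-(1:ℝ)/2) = 1 := by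
        rw [← Real.rpow_add hJv]; norm_num
      rw [Real.rpow_neg hKv.le, div_eq_mul_inv]
      calc I.vol ^ ((1:ℝ)/2) * J.vol ^ ((1:ℝ)/2) * (K.vol ^ (lam/n))⁻¹ *
            I.vol ^ (-(1:ℝ)/2) * J.vol ^ (-(1:ℝ)/2)
          = (I.vol ^ ((1:ℝ)/2) * I.vol ^ (-(1:ℝ)/2)) *
            ((J.vol ^ ((1:ℝ)/2) * J.vol ^ (-(1:ℝ)/2)) * (K.vol ^ (lam/n))⁻¹) := by ring
        _ = (K.vol ^ (lam/n))⁻¹ := by rw [cI, cJ]; ring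
    show ENNReal.ofReal (|a K I J| *
        |∫ y, f y * haarCube I (sig I) y| * |haarCube J (sig J) x|) ≤ _
    calc ENNReal.ofReal (|a K I J| *
          |∫ y, f y * haarCube I (sig I) y| * |haarCube J (sig J) x|)
        = ENNReal.ofReal |a K I J| * ENNReal.ofReal |∫ y, f y * haarCube I (sig I) y| *
          ENNReal.ofReal |haarCube J (sig J) x| := by
          rw [ENNReal.ofReal_mul (mul_nonneg (abs_nonneg _) (abs_nonneg _)),
            ENNReal.ofReal_mul (abs_nonneg _)]
      _ ≤ ENNReal.ofReal (I.vol ^ ((1:ℝ)/2) * J.vol ^ ((1:ℝ)/2) / K.vol ^ (lam/n)) *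
          (ENNReal.ofReal (I.vol ^ (-(1:ℝ)/2)) * ∫⁻ y in I.set, g y) *
          ENNReal.ofReal (J.vol ^ (-(1:ℝ)/2)) :=
          mul_le_mul' (mul_le_mul' (ENNReal.ofReal_le_ofReal (ha K I J hK hI hJ))
            (FracShiftAux.pairing_bound I (sig I) f))
            (ENNReal.ofReal_le_ofReal (FracShiftAux.haarCube_abs_le J (sig J) x))
      _ = ENNReal.ofReal (I.vol ^ ((1:ℝ)/2) * J.vol ^ ((1:ℝ)/2) / K.vol ^ (lam/n) *
            I.vol ^ (-(1:ℝ)/2) * J.vol ^ (-(1:ℝ)/2)) * ∫⁻ y in I.set, g y := by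
          rw [ENNReal.ofReal_mul (mul_nonneg (div_nonneg (mul_nonneg (Real.rpow_nonneg hIv.le _)
              (Real.rpow_nonneg hJv.le _)) (Real.rpow_nonneg hKv.le _))
              (Real.rpow_nonneg hIv.le _)),
            ENNReal.ofReal_mul (div_nonneg (mul_nonneg (Real.rpow_nonneg hIv.le _)
              (Real.rpow_nonneg hJv.le _)) (Real.rpow_nonneg hKv.le _))]
          ring
      _ = ck (-(Int.log 2 K.side)) * ∫⁻ y in I.set, g y := by rw [hreal, hckeq]
      _ = B (-(Int.log 2 K.side), I) :=
          (Set.indicator_of_mem hScond (fun q => ck q.1 * ∫⁻ y in q.2.set, g y)).symm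
  have step1 : (∑' T, F T) ≤ ∑' p : ℤ × Cube n, B p := by
    have hinj : Function.Injective (fun T : Function.support F =>
        ((-(Int.log 2 T.1.1.1.side), T.1.1.2.1) : ℤ × Cube n)) := by
      rintro ⟨T1, hs1⟩ ⟨T2, hs2⟩ heq
      simp only [Prod.mk.injEq] at heq
      obtain ⟨_, hK1, hJ1⟩ := hboundT T1 hs1
      obtain ⟨_, hK2, hJ2⟩ := hboundT T2 hs2
      apply Subtype.ext
      apply Subtype.ext
      have hKeq : T1.1.1 = T2.1.1 := by rw [hK1, hK2, heq.1]
      have hJeq : T1.1.2.2 = T2.1.2.2 := by rw [hJ1, hJ2, heq.1]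
      have hIeq : T1.1.2.1 = T2.1.2.1 := heq.2
      exact Prod.ext hKeq (Prod.ext hIeq hJeq)
    calc (∑' T, F T) = ∑' T : Function.support F, F T.1 := (tsum_subtype_support F).symm
      _ ≤ ∑' T : Function.support F, B (-(Int.log 2 T.1.1.1.side), T.1.1.2.1) :=
          ENNReal.tsum_le_tsum fun T => (hboundT T.1 T.2).1
      _ ≤ ∑' p : ℤ × Cube n, B p := tsum_comp_le_tsum_of_injective hinj B
  -- Step 2
  have step2 : ∀ k : ℤ, (∑' I : Cube n, B (k, I)) ≤ ck k * ∫⁻ y in A k, g y := by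
    intro k
    set sk : _root_.Set (Cube n) := {I | (k, I) ∈ S} with hsk
    have hcongr : (∑' I : Cube n, B (k, I)) =
        ∑' I : Cube n, sk.indicator (fun I' => ck k * ∫⁻ y in I'.set, g y) I := by
      apply tsum_congr; intro I
      by_cases hc : (k, I) ∈ S
      · rw [show B (k, I) = S.indicator (fun q => ck q.1 * ∫⁻ y in q.2.set, g y) (k, I) from rfl,
          Set.indicator_of_mem hc, Set.indicator_of_mem (show I ∈ sk from hc)]
      · rw [show B (k, I) = S.indicator (fun q => ck q.1 * ∫⁻ y in q.2.set, g y) (k, I) from rfl,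
          Set.indicator_of_notMem hc, Set.indicator_of_notMem (show I ∉ sk from hc)]
    rw [hcongr, ← tsum_subtype sk (fun I' => ck k * ∫⁻ y in I'.set, g y),
      ENNReal.tsum_mul_left]
    apply mul_le_mul' le_rfl
    have hdisj : sk.PairwiseDisjoint Cube.set := by
      intro I1 h1 I2 h2 hne12
      exact hsame (k + i) I1 I2 h1.1 h2.1 h1.2.2 h2.2.2 hne12
    have hcnt : sk.Countable :=
      hdisj.countable_of_nonempty_interior fun I _ => FracShiftAux.interior_nonempty I
    haveI := hcnt.to_subtype
    have hpw : Pairwise (Function.onFun Disjoint fun I : sk => I.1.set) := fun I1 I2 hne =>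
      hdisj I1.2 I2.2 fun h => hne (Subtype.ext h)
    calc (∑' I : sk, ∫⁻ y in I.1.set, g y)
        = ∫⁻ y, g y ∂(Measure.sum fun I : sk => volume.restrict I.1.set) :=
          (lintegral_sum_measure g _).symm
      _ = ∫⁻ y, g y ∂(volume.restrict (⋃ I : sk, I.1.set)) := by
          rw [Measure.restrict_iUnion hpw fun I => FracShiftAux.measurableSet_set I.1]
      _ ≤ ∫⁻ y in A k, g y := lintegral_mono_set (Set.iUnion_subset fun I => I.2.2.1)
  -- kernel bound
  have hker : ∀ y, y ≠ x → W y ≤ ENNReal.ofReal C * (ENNReal.ofReal (‖x - y‖ ^ lam))⁻¹ := by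
    intro y hy
    refine FracShiftAux.kernel_bound hn lam hlam0 x y hy A ?_
    intro k hyk
    have h1 := (hK0 k x).2.2
    have h2 := (hK0 k x).2.1
    have h3 := FracShiftAux.norm_sub_le_of_mem h1 hyk
    rwa [h2] at h3
  have hnull : (volume : Measure (EuclideanSpace ℝ (Fin n))) {x} = 0 := by
    haveI : Nonempty (Fin n) := ⟨⟨0, hn⟩⟩
    exact measure_singleton x
  have hWfin : ∀ᵐ y : EuclideanSpace ℝ (Fin n) ∂volume, W y < ∞ := by
    rw [MeasureTheory.ae_iff]
    refine measure_mono_null (fun y hy => ?_) hnull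
    simp only [Set.mem_setOf_eq, not_lt, top_le_iff] at hy
    show y ∈ ({x} : _root_.Set (EuclideanSpace ℝ (Fin n)))
    by_contra hne
    have hyx : y ≠ x := by simpa using hne
    have hfin : W y < ∞ := by
      refine lt_of_le_of_lt (hker y hyx) ?_
      have h2 : (ENNReal.ofReal (‖x - y‖ ^ lam))⁻¹ ≠ ⊤ := by
        rw [Ne, ENNReal.inv_eq_top]
        have : (0:ℝ) < ‖x - y‖ ^ lam := by
          apply Real.rpow_pos_of_pos
          rw [norm_pos_iff]
          exact sub_ne_zero.mpr (Ne.symm hyx)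
        simp [ENNReal.ofReal_eq_zero, not_le, this]
      exact ENNReal.mul_lt_top ENNReal.ofReal_lt_top (lt_top_iff_ne_top.mpr h2)
    exact absurd hy hfin.ne
  have step3 : (∑' k : ℤ, ck k * ∫⁻ y in A k, g y) = ∫⁻ y, W y * g y :=
    FracShiftAux.sum_withDensity A (fun k => FracShiftAux.measurableSet_set _) ck g W hW hWfin
  have step4 : ∀ y, W y * g y ≤
      ENNReal.ofReal C * (g y / ENNReal.ofReal (‖x - y‖ ^ lam)) := by
    intro y
    by_cases hgy : g y = 0
    · rw [hgy, mul_zero]; exact zero_le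
    by_cases hyx : y = x
    · have h0 : ENNReal.ofReal (‖x - y‖ ^ lam) = 0 := by
        rw [hyx, sub_self, norm_zero, Real.zero_rpow hlam0.ne', ENNReal.ofReal_zero]
      rw [h0, ENNReal.div_zero hgy, ENNReal.mul_top ?_]
      · exact le_top
      · simp only [Ne, ENNReal.ofReal_eq_zero, not_le]
        exact mul_pos (Real.rpow_pos_of_pos hsn lam) (inv_pos.mpr h1m)
    · calc W y * g y ≤ (ENNReal.ofReal C * (ENNReal.ofReal (‖x - y‖ ^ lam))⁻¹) * g y :=
            mul_le_mul' (hker y hyx) le_rfl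
        _ = ENNReal.ofReal C * (g y / ENNReal.ofReal (‖x - y‖ ^ lam)) := by
            rw [div_eq_mul_inv]; ring
  calc (∑' T, F T) ≤ ∑' p : ℤ × Cube n, B p := step1
    _ = ∑' k : ℤ, ∑' I : Cube n, B (k, I) := ENNReal.tsum_prod'
    _ ≤ ∑' k : ℤ, ck k * ∫⁻ y in A k, g y := ENNReal.tsum_le_tsum step2
    _ = ∫⁻ y, W y * g y := step3
    _ ≤ ∫⁻ y, ENNReal.ofReal C * (g y / ENNReal.ofReal (‖x - y‖ ^ lam)) :=
        lintegral_mono step4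
    _ = ENNReal.ofReal C * ∫⁻ y, g y / ENNReal.ofReal (‖x - y‖ ^ lam) :=
        lintegral_const_mul' _ _ ENNReal.ofReal_ne_top
end
end

section
/- Let $I, J \in \mathscr{D}^{\omega}$ with $I$ good (with parameters $r \in \mathbb{Z}_+$ and $\gamma = \frac{1}{2(\lambda+1)}$ for some $\lambda > 0$), $I \cap J = \emptyset$, $\ell(I) \leq \ell(J)$, and suppose $\mathrm{dist}(I,J) > \ell(J)\,(\ell(I)/\ell(J))^{1/(2(\lambda+1))}$. If $K = I \vee J$ is the smallest cube of $\mathscr{D}^{\omega}$ containing both $I$ and $J$, then $\ell(K)\,(\ell(I)/\ell(K))^{1/(2(\lambda+1))} \leq 2^r \,\mathrm{dist}(I,J)$. -/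
open MeasureTheory ENNReal Set
noncomputable section

/-- A cube `I` of the dyadic grid `D` is *good* with parameters `r` and `γ` if there is no
`J' ∈ D` with `ℓ(J') ≥ 2^r ℓ(I)` and `dist(I, ∂J') ≤ ℓ(J') (ℓ(I)/ℓ(J'))^γ`. -/
def IsGoodCube {n : ℕ} (D : _root_.Set (Cube n)) (r : ℕ) (γ : ℝ) (I : Cube n) : Prop :=
  ¬ ∃ J' ∈ D, (2:ℝ) ^ r * I.side ≤ J'.side ∧
    setDist I.set (frontier J'.set) ≤ J'.side * (I.side / J'.side) ^ γ


namespace Cube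
variable {n : ℕ}

lemma corner_mem_set (I : Cube n) : I.corner ∈ I.set :=
  fun _ => ⟨le_rfl, lt_add_of_pos_right _ I.side_pos⟩

lemma side_le_of_subset (hn : 0 < n) {I K : Cube n} (h : I.set ⊆ K.set) :
    I.side ≤ K.side := by
  by_contra hlt
  push_neg at hlt
  set i0 : Fin n := ⟨0, hn⟩
  set x : EuclideanSpace ℝ (Fin n) :=
    WithLp.toLp 2 (fun j => I.corner j + if j = i0 then K.side else 0) with hxdef
  have hxI : x ∈ I.set := by
    intro j
    show I.corner j ≤ I.corner j + _ ∧ I.corner j + _ < I.corner j + I.side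
    by_cases hj : j = i0
    · simp only [hj, if_pos]
      exact ⟨by linarith [K.side_pos], by linarith⟩
    · simp [hj, I.side_pos]
  have h1 := (h hxI i0).2
  have h2 := (h I.corner_mem_set i0).1
  have hx0 : x i0 = I.corner i0 + K.side := by simp [hxdef]
  rw [hx0] at h1
  linarith

end Cube

lemma setDist_le' {α : Type*} [PseudoMetricSpace α] {A B : _root_.Set α} {x y : α}
    (hx : x ∈ A) (hy : y ∈ B) : setDist A B ≤ dist x y :=
  csInf_le ⟨0, by rintro d ⟨a, ha, b, hb, rfl⟩; exact dist_nonneg⟩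
    (Set.mem_image2_of_mem hx hy)

lemma le_setDist' {α : Type*} [PseudoMetricSpace α] {A B : _root_.Set α}
    (hA : A.Nonempty) (hB : B.Nonempty) {c : ℝ}
    (h : ∀ x ∈ A, ∀ y ∈ B, c ≤ dist x y) : c ≤ setDist A B :=
  le_csInf (hA.image2 hB) (by rintro d ⟨a, ha, b, hb, rfl⟩; exact h a ha b hb)

lemma segment_inter_frontier_nonempty' {E : Type*} [NormedAddCommGroup E]
    [NormedSpace ℝ E] {t : _root_.Set E} {x y : E} (hxt : x ∈ t)
    (hyt : y ∉ closure t) : (segment ℝ x y ∩ frontier t).Nonempty := by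
  by_contra h
  rw [Set.not_nonempty_iff_eq_empty] at h
  have hpre : IsPreconnected (segment ℝ x y) := (convex_segment x y).isPreconnected
  have hnf : ∀ z ∈ segment ℝ x y, z ∉ frontier t := by
    intro z hz hf
    exact Set.eq_empty_iff_forall_notMem.mp h z ⟨hz, hf⟩
  have hsub : segment ℝ x y ⊆ interior t ∪ (closure t)ᶜ := by
    intro z hz
    by_cases hzc : z ∈ closure t
    · left
      by_contra hzi
      exact hnf z hz ⟨hzc, hzi⟩
    · exact Or.inr hzc
  have hx' : x ∈ interior t := by
    by_contra hxi
    exact hnf x (left_mem_segment ℝ x y) ⟨subset_closure hxt, hxi⟩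
  obtain ⟨z, _, hz1, hz2⟩ := hpre (interior t) (closure t)ᶜ isOpen_interior
    isClosed_closure.isOpen_compl hsub ⟨x, left_mem_segment ℝ x y, hx'⟩
    ⟨y, right_mem_segment ℝ x y, hyt⟩
  exact hz2 (subset_closure (interior_subset hz1))

lemma dist_le_of_mem_segment' {E : Type*} [NormedAddCommGroup E] [NormedSpace ℝ E]
    {x y z : E} (hz : z ∈ segment ℝ x y) : dist x z ≤ dist x y := by
  have hsub : segment ℝ x y ⊆ Metric.closedBall x (dist x y) :=
    (convex_closedBall x (dist x y)).segment_subset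
      (Metric.mem_closedBall_self dist_nonneg)
      (by simp [Metric.mem_closedBall, dist_comm])
  have := hsub hz
  rw [Metric.mem_closedBall] at this
  rwa [dist_comm]


/-- (Hytönen's majorant lemma, separated case.) Let `I, J ∈ 𝒟^ω` with `I`
good (parameters `r`, `γ = 1/(2(λ+1))`), `I ∩ J = ∅`, `ℓ(I) ≤ ℓ(J)`, and
`dist(I,J) > ℓ(J)(ℓ(I)/ℓ(J))^{1/(2(λ+1))}`. If `K = I ∨ J` is the smallest cube of the grid
containing both, then `ℓ(K)(ℓ(I)/ℓ(K))^{1/(2(λ+1))} ≤ 2^r dist(I,J)`. -/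
theorem good_cube_majorant_estimate
    (n : ℕ) (hn : 0 < n) (lam : ℝ) (hlam : 0 < lam) (r : ℕ) (hr : 0 < r)
    (D : _root_.Set (Cube n)) (hD : IsDyadicGrid D)
    (I J K : Cube n) (hI : I ∈ D) (hJ : J ∈ D) (hK : K ∈ D)
    (hgood : IsGoodCube D r (1 / (2 * (lam + 1))) I)
    (hdisj : Disjoint I.set J.set) (hside : I.side ≤ J.side)
    (hsep : J.side * (I.side / J.side) ^ (1 / (2 * (lam + 1))) < setDist I.set J.set)
    (hIK : I.set ⊆ K.set) (hJK : J.set ⊆ K.set)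
    (hmin : ∀ K' ∈ D, I.set ⊆ K'.set → J.set ⊆ K'.set → K.set ⊆ K'.set) :
    K.side * (I.side / K.side) ^ (1 / (2 * (lam + 1))) ≤ 2 ^ r * setDist I.set J.set := by
  set γ := 1 / (2 * (lam + 1)) with hγdef
  have hlam1 : (0:ℝ) < 2 * (lam + 1) := by linarith
  have hγpos : 0 < γ := by rw [hγdef]; exact div_pos one_pos hlam1
  have hγle1 : γ ≤ 1 := by
    rw [hγdef, div_le_one hlam1]; linarith
  have hIpos := I.side_pos
  have hJpos := J.side_pos
  have hKpos := K.side_pos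
  have hIKside : I.side ≤ K.side := Cube.side_le_of_subset hn hIK
  have hIle : I.side ≤ setDist I.set J.set := by
    have h1 : (I.side / J.side) ^ (1:ℝ) ≤ (I.side / J.side) ^ γ :=
      Real.rpow_le_rpow_of_exponent_ge (by positivity)
        (div_le_one_of_le₀ hside hJpos.le) hγle1
    rw [Real.rpow_one] at h1
    have h2 : I.side ≤ J.side * (I.side / J.side) ^ γ := by
      have h3 : J.side * (I.side / J.side) = I.side := by field_simp
      nlinarith
    linarith [le_of_lt hsep]
  have hdpos : 0 < setDist I.set J.set := lt_of_lt_of_le hIpos hIle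
  by_cases hcase : K.side ≤ 2 ^ r * I.side
  · have hratio : (I.side / K.side) ^ γ ≤ 1 :=
      Real.rpow_le_one (by positivity) (div_le_one_of_le₀ hIKside hKpos.le) hγpos.le
    have h2rpos : (0:ℝ) < 2 ^ r := by positivity
    calc K.side * (I.side / K.side) ^ γ
        ≤ K.side := mul_le_of_le_one_right hKpos.le hratio
      _ ≤ 2 ^ r * I.side := hcase
      _ ≤ 2 ^ r * setDist I.set J.set := by nlinarith
  · push_neg at hcase
    obtain ⟨k, hk⟩ := hD.1 K hK
    obtain ⟨m, hm⟩ := hD.1 I hI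
    obtain ⟨K₁, ⟨hK₁D, hK₁side, hcornerK₁⟩, -⟩ := hD.2.1 (k + 1) I.corner
    have hK₁pos := K₁.side_pos
    have hK₁half : K₁.side = K.side / 2 := by
      rw [hK₁side, hk, neg_add, zpow_add₀ (two_ne_zero), zpow_neg_one]
      ring
    have hrK₁ : (2:ℝ) ^ r * I.side ≤ K₁.side := by
      have h2 : (2:ℝ) ^ r * I.side = (2:ℝ) ^ ((r:ℤ) - m) := by
        rw [hm, ← zpow_natCast (2:ℝ) r, ← zpow_add₀ (two_ne_zero), sub_eq_add_neg]
      have h3 : (2:ℝ) ^ ((r:ℤ) - m) < (2:ℝ) ^ (-k) := by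
        rw [← h2, ← hk]; exact hcase
      have h4 : (r:ℤ) - m < -k := (zpow_lt_zpow_iff_right₀ (one_lt_two : (1:ℝ) < 2)).mp h3
      have h5 : (r:ℤ) - m ≤ -(k + 1) := by omega
      calc (2:ℝ) ^ r * I.side = (2:ℝ) ^ ((r:ℤ) - m) := h2
        _ ≤ (2:ℝ) ^ (-(k + 1)) := (zpow_le_zpow_iff_right₀ (one_lt_two : (1:ℝ) < 2)).mpr h5
        _ = K₁.side := hK₁side.symm
    have h2le2r : (2:ℝ) ≤ 2 ^ r := by
      calc (2:ℝ) = 2 ^ 1 := (pow_one 2).symm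
        _ ≤ 2 ^ r := pow_le_pow_right₀ one_le_two hr
    have hIK₁ : I.set ⊆ K₁.set := by
      rcases hD.2.2 I hI K₁ hK₁D with h | h | h
      · exact h
      · exfalso
        have hle := Cube.side_le_of_subset hn h
        nlinarith
      · exact (Set.disjoint_left.mp h I.corner_mem_set hcornerK₁).elim
    have hJK₁ : Disjoint J.set K₁.set := by
      rcases hD.2.2 J hJ K₁ hK₁D with h | h | h
      · exfalso
        have hsub := hmin K₁ hK₁D hIK₁ h
        have hle := Cube.side_le_of_subset hn hsub
        rw [hK₁half] at hle
        linarith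
      · exfalso
        exact Set.disjoint_left.mp hdisj I.corner_mem_set (h (hIK₁ I.corner_mem_set))
      · exact h
    have hgood' : K₁.side * (I.side / K₁.side) ^ γ < setDist I.set (frontier K₁.set) := by
      by_contra hle
      push_neg at hle
      exact hgood ⟨K₁, hK₁D, hrK₁, hle⟩
    have hfr : setDist I.set (frontier K₁.set) ≤ setDist I.set J.set := by
      apply le_setDist' ⟨I.corner, I.corner_mem_set⟩ ⟨J.corner, J.corner_mem_set⟩
      intro x hx y hy
      have hxK₁ : x ∈ K₁.set := hIK₁ hx
      by_cases hyc : y ∈ closure K₁.set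
      · have hyf : y ∈ frontier K₁.set :=
          ⟨hyc, fun hint => Set.disjoint_left.mp hJK₁ hy (interior_subset hint)⟩
        exact setDist_le' hx hyf
      · obtain ⟨z, hzseg, hzf⟩ := segment_inter_frontier_nonempty' hxK₁ hyc
        exact le_trans (setDist_le' hx hzf) (dist_le_of_mem_segment' hzseg)
    have hfinal : K.side * (I.side / K.side) ^ γ ≤ 2 * (K₁.side * (I.side / K₁.side) ^ γ) := by
      rw [hK₁half]
      have hbase : I.side / K.side ≤ I.side / (K.side / 2) := by
        rw [div_le_div_iff₀ (by positivity) (by positivity)]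
        nlinarith
      have hrp : (I.side / K.side) ^ γ ≤ (I.side / (K.side / 2)) ^ γ :=
        Real.rpow_le_rpow (by positivity) hbase hγpos.le
      calc K.side * (I.side / K.side) ^ γ
          ≤ K.side * (I.side / (K.side / 2)) ^ γ := by nlinarith
        _ = 2 * (K.side / 2 * (I.side / (K.side / 2)) ^ γ) := by ring
    calc K.side * (I.side / K.side) ^ γ
        ≤ 2 * (K₁.side * (I.side / K₁.side) ^ γ) := hfinal
      _ ≤ 2 * setDist I.set J.set := by linarith
      _ ≤ 2 ^ r * setDist I.set J.set := by nlinarith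
end
end
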